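/- arXiv:0901.2660 — 5 statements merged into one kernel-verified Lean document; each statement's English description precedes it below -/
import Mathlib

section
/- Let W be a Coxeter group with generators s_1,...,s_n, and ~ the equivalence relation on generators generated by s_i ~ s_j whenever m_ij is odd. Then two distinguished generators s_i and s_j are conjugate in W if and only if s_i ~ s_j. -/
private lemma odd_conj {n : ℕ} (M : CoxeterMatrix (Fin n)) {W : Type*} [Group W]
    (cs : CoxeterSystem M W) (a b : Fin n) (h : Odd (M a b)) :
    IsConj (cs.simple a) (cs.simple b) := by
  obtain ⟨k, hk⟩ := h
  set x := cs.simple a * cs.simple b with hx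
  have hpow : x ^ (2 * k + 1) = 1 := by
    rw [hx, ← hk]; exact cs.simple_mul_simple_pow a b
  have hsemi : SemiconjBy (cs.simple a) ((cs.simple b * cs.simple a) ^ k) (x ^ k) := by
    refine SemiconjBy.pow_right ?_ k
    show cs.simple a * (cs.simple b * cs.simple a) = x * cs.simple a
    rw [hx]; group
  rw [isConj_iff]
  refine ⟨x ^ k, ?_⟩
  have hinv : (x ^ k)⁻¹ = (cs.simple b * cs.simple a) ^ k := by
    rw [← inv_pow, hx, mul_inv_rev, cs.inv_simple, cs.inv_simple]
  rw [hinv, mul_assoc, hsemi.eq, ← mul_assoc, ← pow_add]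
  have hxx : x ^ (k + k) = cs.simple b * cs.simple a := by
    have : x ^ (2 * k + 1) * x⁻¹ = x⁻¹ := by rw [hpow, one_mul]
    have h2 : x ^ (k + k) = x⁻¹ := by
      rw [← this, pow_succ, two_mul, mul_assoc, mul_inv_cancel, mul_one]
    rw [h2, hx, mul_inv_rev, cs.inv_simple, cs.inv_simple]
  rw [hxx, mul_assoc, cs.simple_mul_simple_self, mul_one]

/-- Let `W` be a Coxeter group with generators `s i`, and `~` the equivalence relation on the
generator indices generated by `i ~ j` whenever `M i j` is (finite and) odd. Then two
distinguished generators `s i` and `s j` are conjugate in `W` if and only if `i ~ j`. -/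
theorem stmt2 {n : ℕ} (M : CoxeterMatrix (Fin n)) {W : Type*} [Group W]
    (cs : CoxeterSystem M W) (i j : Fin n) :
    IsConj (cs.simple i) (cs.simple j) ↔
      Relation.EqvGen (fun a b : Fin n => Odd (M a b)) i j := by
  classical
  constructor
  · intro h
    set R : Fin n → Fin n → Prop := fun a b => Odd (M a b) with hR
    set f : Fin n → ℤˣ := fun a => if Relation.EqvGen R a i then -1 else 1 with hf
    have hlift : M.IsLiftable f := by
      intro a b
      by_cases hodd : Odd (M a b)
      · have hab : Relation.EqvGen R a i ↔ Relation.EqvGen R b i := by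
          constructor
          · intro h'; exact Relation.EqvGen.trans _ _ _
              (Relation.EqvGen.symm _ _ (Relation.EqvGen.rel a b hodd)) h'
          · intro h'; exact Relation.EqvGen.trans _ _ _ (Relation.EqvGen.rel a b hodd) h'
        have : f a = f b := by simp only [hf, hab]
        rw [this]
        rcases Int.units_eq_one_or (f b) with h1 | h1 <;> simp [h1]
      · obtain ⟨t, ht⟩ := Nat.not_odd_iff_even.mp hodd
        rw [ht, ← two_mul, pow_mul, Int.units_sq, one_pow]
    set φ := cs.lift ⟨f, hlift⟩ with hφ
    have hmap : IsConj (φ (cs.simple i)) (φ (cs.simple j)) := φ.map_isConj h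
    rw [isConj_iff_eq] at hmap
    rw [hφ, cs.lift_apply_simple, cs.lift_apply_simple] at hmap
    have hi : f i = -1 := by simp [hf, Relation.EqvGen.refl i]
    rw [hi] at hmap
    by_contra hc
    have hji : ¬ Relation.EqvGen R j i := fun h' => hc (Relation.EqvGen.symm _ _ h')
    simp only [hf, if_neg hji] at hmap
    exact absurd hmap (by decide)
  · intro h
    induction h with
    | rel a b hab => exact odd_conj M cs a b hab
    | refl a => exact IsConj.refl _
    | symm a b _ ih => exact ih.symm
    | trans a b c _ _ ih1 ih2 => exact ih1.trans ih2
end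

section
/- Let W be a finitely generated Coxeter group with generators s_1,...,s_n such that the graph on {1,...,n} with edges {i,j} whenever m_ij is odd is connected. Then W is generated by the set of conjugates of s_n by elements of the parabolic subgroup W' = ⟨s_1,...,s_{n-1}⟩. -/
/-- Group identity: if `x, y` are involutions and `(x*y)^(2k+1) = 1`, then
`x = (y * (x * y * x))^k * y`. -/
private lemma odd_conj_identity {G : Type*} [Group G] {x y : G} {k : ℕ}
    (h1 : (x * y) ^ (2 * k + 1) = 1) (hx : x * x = 1) (hy : y * y = 1) :
    (y * (x * y * x)) ^ k * y = x := by
  have hxinv : x⁻¹ = x := by rw [inv_eq_iff_mul_eq_one, hx]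
  have hyinv : y⁻¹ = y := by rw [inv_eq_iff_mul_eq_one, hy]
  have h2 : (y * x) ^ (2 * k + 1) = 1 := by
    have : (y * x) = (x * y)⁻¹ := by rw [mul_inv_rev, hxinv, hyinv]
    rw [this, inv_pow, h1, inv_one]
  have h3 : (y * x) ^ (2 * k) = x * y := by
    have := h2
    rw [pow_succ] at this
    have h4 : (y * x) ^ (2 * k) = (y * x)⁻¹ := by
      rw [eq_inv_iff_mul_eq_one]; exact this
    rw [h4, mul_inv_rev, hxinv, hyinv]
  calc (y * (x * y * x)) ^ k * y = ((y * x) ^ 2) ^ k * y := by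
        congr 2; rw [pow_two]; group
    _ = (y * x) ^ (2 * k) * y := by rw [← pow_mul]
    _ = x * y * y := by rw [h3]
    _ = x := by rw [mul_assoc, hy, mul_one]

/-- Let `W` be a finitely generated Coxeter group with generators `s 0, ..., s n` (the last
one playing the role of `s_n`) such that the graph on the generator indices with edges
`{i,j}` whenever `M i j` is odd is connected. Then `W` is generated by the set of conjugates
of `s n` by elements of the maximal parabolic subgroup `W' = ⟨s i : i ≠ n⟩`. -/
theorem stmt4 {n : ℕ} (M : CoxeterMatrix (Fin (n + 1))) {W : Type*} [Group W]
    (cs : CoxeterSystem M W)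
    (hconn : ∀ i j : Fin (n + 1), Relation.EqvGen (fun a b => Odd (M a b)) i j) :
    Subgroup.closure {x : W | ∃ w ∈ Subgroup.closure
        (cs.simple '' {i : Fin (n + 1) | i ≠ Fin.last n}),
        x = w⁻¹ * cs.simple (Fin.last n) * w} = ⊤ := by
  set P := Subgroup.closure (cs.simple '' {i : Fin (n + 1) | i ≠ Fin.last n}) with hP
  set S : Set W := {x : W | ∃ w ∈ P, x = w⁻¹ * cs.simple (Fin.last n) * w} with hSdef
  set C := Subgroup.closure S with hCdef
  -- C is closed under conjugation by elements of P
  have hconj : ∀ w ∈ P, ∀ x ∈ C, w⁻¹ * x * w ∈ C := by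
    intro w hw x hx
    induction hx using Subgroup.closure_induction with
    | mem y hy =>
      obtain ⟨v, hv, rfl⟩ := hy
      apply Subgroup.subset_closure
      exact ⟨v * w, mul_mem hv hw, by group⟩
    | one => simpa using one_mem C
    | mul y z _ _ hy hz =>
      have : w⁻¹ * (y * z) * w = (w⁻¹ * y * w) * (w⁻¹ * z * w) := by group
      rw [this]; exact mul_mem hy hz
    | inv y _ hy =>
      have : w⁻¹ * y⁻¹ * w = (w⁻¹ * y * w)⁻¹ := by group
      rw [this]; exact inv_mem hy
  -- the key step along odd edges
  have hstep : ∀ i j : Fin (n + 1), Odd (M i j) → cs.simple j ∈ C → cs.simple i ∈ C := by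
    intro i j hodd hj
    by_cases hi : i = Fin.last n
    · subst hi
      exact Subgroup.subset_closure ⟨1, one_mem P, by simp⟩
    · have hiP : cs.simple i ∈ P := Subgroup.subset_closure ⟨i, hi, rfl⟩
      have hb : (cs.simple i)⁻¹ * cs.simple j * cs.simple i ∈ C := hconj _ hiP _ hj
      rw [cs.inv_simple] at hb
      obtain ⟨k, hk⟩ := hodd
      have hrel : (cs.simple i * cs.simple j) ^ (2 * k + 1) = 1 := by
        rw [← hk]; exact cs.simple_mul_simple_pow i j
      have hid := odd_conj_identity hrel (cs.simple_mul_simple_self i)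
        (cs.simple_mul_simple_self j)
      rw [← hid]
      exact mul_mem (pow_mem (mul_mem hj hb) k) hj
  -- the last simple is in C
  have hlast : cs.simple (Fin.last n) ∈ C :=
    Subgroup.subset_closure ⟨1, one_mem P, by simp⟩
  -- all simples are in C, by connectivity
  have hsimple : ∀ i : Fin (n + 1), cs.simple i ∈ C := by
    intro i
    have key : ∀ a b : Fin (n + 1),
        Relation.EqvGen (fun a b => Odd (M a b)) a b →
        (cs.simple a ∈ C ↔ cs.simple b ∈ C) := by
      intro a b hab
      induction hab with
      | rel a b h =>
        constructor
        · intro ha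
          exact hstep b a (by rwa [M.symmetric]) ha
        · intro hb
          exact hstep a b h hb
      | refl a => rfl
      | symm a b _ ih => exact ih.symm
      | trans a b c _ _ ih1 ih2 => exact ih1.trans ih2
    exact (key i (Fin.last n) (hconn i (Fin.last n))).mpr hlast
  rw [eq_top_iff, ← cs.subgroup_closure_range_simple]
  apply Subgroup.closure_le _ |>.mpr
  rintro _ ⟨i, rfl⟩
  exact hsimple i
end

section
/- Let W be a finitely generated Coxeter group with generators s_1,...,s_n, let W' = ⟨s_1,...,s_{n-1}⟩, and let X = {i ∈ {1,...,n-1} : m_in = 2}. Then the centralizer of s_n in W' equals the standard parabolic subgroup W_X = ⟨s_i : i ∈ X⟩. -/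
namespace Stmt8Aux
set_option linter.unusedSectionVars false
variable {B : Type*} [DecidableEq B] [Fintype B]
noncomputable def Cm (M : CoxeterMatrix B) (a b : B) : ℝ :=
  if M a b = 0 then -1 else -Real.cos (Real.pi / M a b)
variable (M : CoxeterMatrix B)
theorem Cm_diag (a : B) : Cm M a a = 1 := by
  unfold Cm; rw [M.diagonal a]; simp
theorem Cm_symm (a b : B) : Cm M a b = Cm M b a := by
  unfold Cm; rw [M.symmetric a b]

/-- basis vector -/
def E (i : B) : B → ℝ := Pi.single i 1

/-- pairing with a simple root -/
noncomputable def fE (i : B) (v : B → ℝ) : ℝ := ∑ b, Cm M i b * v b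

theorem fE_add (i : B) (v w : B → ℝ) : fE M i (v + w) = fE M i v + fE M i w := by
  unfold fE
  rw [← Finset.sum_add_distrib]
  congr 1; ext b; simp [mul_add]

theorem fE_smul (i : B) (c : ℝ) (v : B → ℝ) : fE M i (c • v) = c * fE M i v := by
  unfold fE
  rw [Finset.mul_sum]
  congr 1; ext b; simp; ring

theorem fE_E (i j : B) : fE M i (E j) = Cm M i j := by
  unfold fE E
  rw [Finset.sum_eq_single j]
  · simp
  · intro b _ hb; simp [Pi.single_eq_of_ne hb]
  · simp

/-- simple reflection as a linear endomorphism -/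
noncomputable def refl (i : B) : Module.End ℝ (B → ℝ) where
  toFun v := v - (2 * fE M i v) • E i
  map_add' v w := by
    show (v + w) - _ • E i = (v - _ • E i) + (w - _ • E i)
    rw [fE_add]; ext b; simp [E]; ring
  map_smul' c v := by
    show (c • v) - _ • E i = c • (v - _ • E i)
    rw [fE_smul]; ext b; simp [E]; ring

theorem refl_apply (i : B) (v : B → ℝ) : refl M i v = v - (2 * fE M i v) • E i := rfl

theorem refl_E_self (i : B) : refl M i (E i) = -E i := by
  rw [refl_apply, fE_E, Cm_diag]
  ext b; simp [E]; ring

theorem fE_refl (i : B) (v : B → ℝ) : fE M i (refl M i v) = -fE M i v := by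
  rw [refl_apply]
  have : v - (2 * fE M i v) • E i = v + (-(2 * fE M i v)) • E i := by
    ext b; simp; ring
  rw [this, fE_add, fE_smul, fE_E, Cm_diag]
  ring

theorem refl_sq (i : B) : refl M i * refl M i = 1 := by
  apply LinearMap.ext; intro v
  show refl M i (refl M i v) = v
  rw [refl_apply M i (refl M i v), fE_refl, refl_apply]
  show _ = v
  ext b; simp

theorem refl_fixed {i : B} {v : B → ℝ} (h : fE M i v = 0) : refl M i v = v := by
  rw [refl_apply, h]; simp

/-- the bilinear form -/
noncomputable def BF (x y : B → ℝ) : ℝ := ∑ a, x a * fE M a y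

theorem BF_E_left (i : B) (y : B → ℝ) : BF M (E i) y = fE M i y := by
  unfold BF E
  rw [Finset.sum_eq_single i]
  · simp
  · intro b _ hb; simp [Pi.single_eq_of_ne hb]
  · simp

theorem BF_symm (x y : B → ℝ) : BF M x y = BF M y x := by
  unfold BF fE
  simp_rw [Finset.mul_sum]
  rw [Finset.sum_comm]
  congr 1; ext a; congr 1; ext b
  rw [Cm_symm]; ring

theorem BF_E_right (i : B) (y : B → ℝ) : BF M y (E i) = fE M i y := by
  rw [BF_symm, BF_E_left]

theorem BF_add_left (x x' y : B → ℝ) : BF M (x + x') y = BF M x y + BF M x' y := by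
  unfold BF
  rw [← Finset.sum_add_distrib]
  congr 1; ext a; simp [add_mul]

theorem BF_smul_left (c : ℝ) (x y : B → ℝ) : BF M (c • x) y = c * BF M x y := by
  unfold BF
  rw [Finset.mul_sum]
  congr 1; ext a; simp; ring

theorem BF_refl (i : B) (x y : B → ℝ) : BF M (refl M i x) (refl M i y) = BF M x y := by
  rw [refl_apply M i x, refl_apply M i y, sub_eq_add_neg, sub_eq_add_neg,
    ← neg_smul, ← neg_smul]
  rw [BF_add_left, BF_smul_left]
  rw [BF_symm M x _, BF_symm M (E i) _]
  rw [BF_add_left, BF_add_left, BF_smul_left, BF_smul_left]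
  rw [BF_E_left, BF_E_left, BF_E_right, fE_E, Cm_diag, BF_symm M y x]
  ring

open CoxeterSystem Real

theorem two_le_M {a b : B} (h : a ≠ b) (h0 : M a b ≠ 0) : 2 ≤ M a b := by
  have h1 := M.off_diagonal a b h
  omega

theorem Cm_nonpos {a b : B} (h : a ≠ b) : Cm M a b ≤ 0 := by
  unfold Cm
  split
  · norm_num
  · rename_i h0
    have h2 : 2 ≤ M a b := two_le_M M h h0
    have h2' : (2 : ℝ) ≤ (M a b : ℝ) := by exact_mod_cast h2
    have hpos : (0:ℝ) < (M a b : ℝ) := by linarith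
    have : 0 ≤ Real.cos (Real.pi / M a b) := by
      apply Real.cos_nonneg_of_mem_Icc
      constructor
      · have : 0 < Real.pi / (M a b : ℝ) := by positivity
        have := Real.pi_pos
        linarith
      · rw [div_le_div_iff₀ hpos two_pos]
        have := Real.pi_pos
        nlinarith
    linarith

theorem Cm_eq_zero_iff {a b : B} (h : a ≠ b) : Cm M a b = 0 ↔ M a b = 2 := by
  unfold Cm
  split
  · rename_i h0
    constructor
    · intro h1; norm_num at h1
    · intro h1; omega
  · rename_i h0
    constructor
    · intro h1
      by_contra h2
      have h3 : 3 ≤ M a b := by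
        have := two_le_M M h h0
        omega
      have h3' : (3:ℝ) ≤ (M a b : ℝ) := by exact_mod_cast h3
      have hpos : (0:ℝ) < (M a b : ℝ) := by linarith
      have : 0 < Real.cos (Real.pi / M a b) := by
        apply Real.cos_pos_of_mem_Ioo
        constructor
        · have : 0 < Real.pi / (M a b : ℝ) := by positivity
          have := Real.pi_pos
          linarith
        · rw [div_lt_div_iff₀ hpos two_pos]
          have := Real.pi_pos
          nlinarith
      linarith
    · intro h1
      rw [h1]
      norm_num

theorem fE_plane (i j a : B) (x y : ℝ) :
    fE M a (x • E i + y • E j) = x * Cm M a i + y * Cm M a j := by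
  rw [fE_add, fE_smul, fE_smul, fE_E, fE_E]

theorem refl_plane_left (i j : B) (x y : ℝ) :
    refl M i (x • E i + y • E j) = (-x - 2 * Cm M i j * y) • E i + y • E j := by
  rw [refl_apply, fE_plane, Cm_diag]
  ext b; simp [E]; ring

theorem refl_plane_right (i j : B) (x y : ℝ) :
    refl M j (x • E i + y • E j) = x • E i + (-y - 2 * Cm M i j * x) • E j := by
  rw [refl_apply, fE_plane, Cm_diag, Cm_symm M j i]
  ext b; simp [E]; ring

/-- product of reflections along a word -/
noncomputable def Tw (ω : List B) : Module.End ℝ (B → ℝ) := (ω.map (refl M)).prod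

theorem Tw_nil : Tw M ([] : List B) = 1 := by simp [Tw]

theorem Tw_cons (i : B) (ω : List B) : Tw M (i :: ω) = refl M i * Tw M ω := by
  simp [Tw]

/-- sine quotient -/
noncomputable def Sq (m : ℕ) (x : ℝ) : ℝ :=
  Real.sin (x * (Real.pi / m)) / Real.sin (Real.pi / m)

section Rank2

variable {i j : B}

theorem Mpos (hm : 2 ≤ M i j) : (0:ℝ) < (M i j : ℝ) := by
  exact_mod_cast Nat.lt_of_lt_of_le (by norm_num) hm

theorem theta_pos (hm : 2 ≤ M i j) : 0 < Real.pi / M i j := by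
  have := Real.pi_pos
  have := Mpos M hm
  positivity

theorem theta_le (hm : 2 ≤ M i j) : Real.pi / M i j ≤ Real.pi / 2 := by
  apply div_le_div_of_nonneg_left Real.pi_pos.le (by norm_num)
  exact_mod_cast hm

theorem sin_theta_pos (hm : 2 ≤ M i j) : 0 < Real.sin (Real.pi / M i j) := by
  apply Real.sin_pos_of_pos_of_lt_pi (theta_pos M hm)
  have := theta_le M hm
  have := Real.pi_pos
  linarith

theorem Cm_eq_neg_cos (hm : 2 ≤ M i j) : Cm M i j = -Real.cos (Real.pi / M i j) := by
  unfold Cm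
  rw [if_neg (by omega)]

theorem Sq_one (hm : 2 ≤ M i j) : Sq (M i j) 1 = 1 := by
  unfold Sq
  rw [one_mul, div_self (sin_theta_pos M hm).ne']

theorem Sq_zero (m : ℕ) : Sq m 0 = 0 := by
  unfold Sq; simp

theorem Sq_neg_one (hm : 2 ≤ M i j) : Sq (M i j) (-1) = -1 := by
  unfold Sq
  rw [neg_one_mul, Real.sin_neg, neg_div, div_self (sin_theta_pos M hm).ne']

/-- The key recurrence -/
theorem Sq_rec (hm : 2 ≤ M i j) (x : ℝ) :
    Sq (M i j) (x + 1) = -2 * Cm M i j * Sq (M i j) x - Sq (M i j) (x - 1) := by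
  unfold Sq
  rw [Cm_eq_neg_cos M hm]
  set θ := Real.pi / M i j
  rw [add_mul, sub_mul, one_mul, Real.sin_add, Real.sin_sub]
  field_simp
  ring

theorem Sq_nonneg_of (hm : 2 ≤ M i j) {k : ℕ} (hk : k ≤ M i j) : 0 ≤ Sq (M i j) k := by
  unfold Sq
  apply div_nonneg _ (sin_theta_pos M hm).le
  apply Real.sin_nonneg_of_nonneg_of_le_pi
  · positivity
  · have h1 : (k:ℝ) ≤ (M i j : ℝ) := by exact_mod_cast hk
    have h2 : (M i j : ℝ) * (Real.pi / M i j) = Real.pi := by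
      field_simp
    have h3 := (theta_pos M hm).le
    nlinarith

theorem Sq_two_m_add_one (hm : 2 ≤ M i j) : Sq (M i j) (2 * (M i j) + 1) = 1 := by
  unfold Sq
  have h2 : (2 * (M i j:ℝ) + 1) * (Real.pi / M i j) = Real.pi / M i j + 2 * Real.pi := by
    have := (Mpos M hm).ne'
    push_cast
    field_simp
    ring
  rw [h2, Real.sin_add_two_pi, div_self (sin_theta_pos M hm).ne']

theorem Sq_two_m (hm : 2 ≤ M i j) : Sq (M i j) (2 * (M i j)) = 0 := by
  unfold Sq
  have h2 : (2 * (M i j:ℝ)) * (Real.pi / M i j) = 2 * Real.pi := by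
    have := (Mpos M hm).ne'
    push_cast
    field_simp
  rw [h2]
  simp [Real.sin_two_pi]

theorem Sq_two_m_sub_one (hm : 2 ≤ M i j) : Sq (M i j) (2 * (M i j:ℝ) - 1) = -1 := by
  unfold Sq
  have h2 : (2 * (M i j:ℝ) - 1) * (Real.pi / M i j) = 2 * Real.pi - Real.pi / M i j := by
    have := (Mpos M hm).ne'
    push_cast
    field_simp
  rw [h2, Real.sin_two_pi_sub, neg_div, div_self (sin_theta_pos M hm).ne']

/-- The core rank-2 computation: action of alternating products of reflections
on the two basis vectors. -/
theorem core (hij : i ≠ j) (hm : 2 ≤ M i j) (k : ℕ) :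
    Tw M (alternatingWord i j k) (E i) =
      (if Even k then Sq (M i j) ((k:ℝ)+1) else Sq (M i j) (k:ℝ)) • E i +
      (if Even k then Sq (M i j) (k:ℝ) else Sq (M i j) ((k:ℝ)+1)) • E j ∧
    Tw M (alternatingWord i j k) (E j) =
      (-(if Even k then Sq (M i j) (k:ℝ) else Sq (M i j) ((k:ℝ)-1))) • E i +
      (-(if Even k then Sq (M i j) ((k:ℝ)-1) else Sq (M i j) (k:ℝ))) • E j := by
  induction k with
  | zero =>
    simp only [Nat.cast_zero, Even.zero, if_true, alternatingWord]
    rw [Tw_nil]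
    constructor
    · rw [Sq_zero, zero_add, Sq_one M hm]
      ext b; simp [E]
    · rw [Sq_zero, zero_sub, Sq_neg_one M hm]
      ext b; simp [E]
  | succ k IH =>
    obtain ⟨IH1, IH2⟩ := IH
    rw [alternatingWord_succ', Tw_cons]
    rcases Nat.even_or_odd k with he | ho
    · simp only [if_pos he] at IH1 IH2
      have ho' : ¬ Even (k+1) := by simp [Nat.even_add_one, he]
      simp only [if_pos he, if_neg ho']
      push_cast
      constructor
      · rw [Module.End.mul_apply, IH1, refl_plane_right]
        have e1 : -Sq (M i j) (k:ℝ) - 2 * Cm M i j * Sq (M i j) ((k:ℝ)+1)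
            = Sq (M i j) ((k:ℝ)+1+1) := by
          have h := Sq_rec M hm ((k:ℝ)+1)
          rw [add_sub_cancel_right] at h
          linarith
        rw [e1]
      · rw [Module.End.mul_apply, IH2, refl_plane_right]
        have e1 : -(-Sq (M i j) ((k:ℝ)-1)) - 2 * Cm M i j * (-Sq (M i j) (k:ℝ))
            = -(Sq (M i j) ((k:ℝ)+1)) := by
          have h := Sq_rec M hm (k:ℝ)
          linarith
        rw [e1, add_sub_cancel_right]
    · have he' : Even (k+1) := by simp [Nat.even_add_one, Nat.not_even_iff_odd.mpr ho]
      have hno : ¬ Even k := Nat.not_even_iff_odd.mpr ho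
      simp only [if_neg hno] at IH1 IH2
      simp only [if_neg hno, if_pos he']
      push_cast
      constructor
      · rw [Module.End.mul_apply, IH1, refl_plane_left]
        have e1 : -Sq (M i j) (k:ℝ) - 2 * Cm M i j * Sq (M i j) ((k:ℝ)+1)
            = Sq (M i j) ((k:ℝ)+1+1) := by
          have h := Sq_rec M hm ((k:ℝ)+1)
          rw [add_sub_cancel_right] at h
          linarith
        rw [e1]
      · rw [Module.End.mul_apply, IH2, refl_plane_left]
        have e1 : -(-Sq (M i j) ((k:ℝ)-1)) - 2 * Cm M i j * (-Sq (M i j) (k:ℝ))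
            = -(Sq (M i j) ((k:ℝ)+1)) := by
          have h := Sq_rec M hm (k:ℝ)
          linarith
        rw [e1, add_sub_cancel_right]

theorem Tw_alt_even (i j : B) (l : ℕ) :
    Tw M (alternatingWord i j (2*l)) = (refl M i * refl M j)^l := by
  induction l with
  | zero => simp [alternatingWord, Tw_nil]
  | succ l IH =>
    have h2 : 2*(l+1) = (2*l+1)+1 := by ring
    rw [h2, alternatingWord_succ', alternatingWord_succ', Tw_cons, Tw_cons]
    rw [if_neg (by simp [Nat.even_add_one]), if_pos (by simp : Even (2*l))]
    rw [IH, pow_succ', ← mul_assoc]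

theorem d_pos (hm : 2 ≤ M i j) : 0 < 1 - Cm M i j ^ 2 := by
  rw [Cm_eq_neg_cos M hm]
  have h := Real.sin_sq_add_cos_sq (Real.pi / M i j)
  have h2 := sin_theta_pos M hm
  nlinarith

theorem sigma_pow_E_i (hij : i ≠ j) (hm : 2 ≤ M i j) :
    ((refl M i * refl M j)^(M i j)) (E i) = E i := by
  have h := (core M hij hm (2 * M i j)).1
  rw [Tw_alt_even, if_pos (by simp : Even (2 * M i j)), if_pos (by simp : Even (2 * M i j))] at h
  push_cast at h
  rw [Sq_two_m_add_one M hm, Sq_two_m M hm] at h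
  rw [h]; ext b; simp

theorem sigma_pow_E_j (hij : i ≠ j) (hm : 2 ≤ M i j) :
    ((refl M i * refl M j)^(M i j)) (E j) = E j := by
  have h := (core M hij hm (2 * M i j)).2
  rw [Tw_alt_even, if_pos (by simp : Even (2 * M i j)), if_pos (by simp : Even (2 * M i j))] at h
  push_cast at h
  rw [Sq_two_m M hm, Sq_two_m_sub_one M hm] at h
  rw [h]; ext b; simp

theorem pow_fixed (f : Module.End ℝ (B → ℝ)) (v : B → ℝ) (h : f v = v) (k : ℕ) :
    (f^k) v = v := by
  induction k with
  | zero => simp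
  | succ k IH => rw [pow_succ, Module.End.mul_apply, h, IH]

theorem relation_pow (hij : i ≠ j) (hm : 2 ≤ M i j) :
    (refl M i * refl M j)^(M i j) = 1 := by
  apply LinearMap.ext; intro v
  set c := Cm M i j with hc
  have hd := d_pos M hm
  set d := 1 - c^2 with hdd
  set p := (fE M i v - c * fE M j v)/d with hp
  set q := (fE M j v - c * fE M i v)/d with hq
  set u := v + (-p) • E i + (-q) • E j with hu
  have hui : fE M i u = 0 := by
    rw [hu, fE_add, fE_add, fE_smul, fE_smul, fE_E, fE_E, Cm_diag, hp, hq, ← hc]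
    field_simp
    ring
  have huj : fE M j u = 0 := by
    rw [hu, fE_add, fE_add, fE_smul, fE_smul, fE_E, fE_E, Cm_diag, Cm_symm M j i, hp, hq, ← hc]
    field_simp
    ring
  have hfix : ((refl M i * refl M j)^(M i j)) u = u := by
    apply pow_fixed
    rw [Module.End.mul_apply, refl_fixed M huj, refl_fixed M hui]
  have hv : v = p • E i + q • E j + u := by
    rw [hu]; ext b; simp; ring
  rw [Module.End.one_apply]
  calc ((refl M i * refl M j) ^ M.M i j) v
      = ((refl M i * refl M j) ^ M.M i j) (p • E i + q • E j + u) := by rw [← hv]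
    _ = p • (((refl M i * refl M j) ^ M.M i j) (E i)) +
        q • (((refl M i * refl M j) ^ M.M i j) (E j)) +
        ((refl M i * refl M j) ^ M.M i j) u := by
          rw [map_add, map_add, map_smul, map_smul]
    _ = p • E i + q • E j + u := by
          rw [sigma_pow_E_i M hij hm, sigma_pow_E_j M hij hm, hfix]
    _ = v := hv.symm

end Rank2

theorem liftable : CoxeterMatrix.IsLiftable M (fun i => refl M i) := by
  intro i i'
  by_cases h : i = i'
  · subst h
    rw [M.diagonal, pow_one, refl_sq]
  · by_cases h0 : M i i' = 0
    · rw [h0, pow_zero]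
    · exact relation_pow M h (two_le_M M h h0)

theorem Cm_infty {i j : B} (h0 : M i j = 0) : Cm M i j = -1 := by
  unfold Cm; rw [if_pos h0]

/-- rank-2 computation in the infinite case -/
theorem core0 {i j : B} (h0 : M i j = 0) (k : ℕ) :
    Tw M (alternatingWord i j k) (E i) =
      (if Even k then (k:ℝ)+1 else (k:ℝ)) • E i +
      (if Even k then (k:ℝ) else (k:ℝ)+1) • E j := by
  induction k with
  | zero =>
    rw [alternatingWord, Tw_nil]
    simp only [Nat.cast_zero, Even.zero, if_true]
    ext b; simp [E]
  | succ k IH =>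
    rw [alternatingWord_succ', Tw_cons]
    rcases Nat.even_or_odd k with he | ho
    · simp only [if_pos he] at IH
      have hno : ¬ Even (k+1) := by simp [Nat.even_add_one, he]
      simp only [if_pos he, if_neg hno]
      rw [Module.End.mul_apply, IH, refl_plane_right, Cm_infty M h0]
      push_cast
      have e1 : -(k:ℝ) - 2 * (-1) * ((k:ℝ)+1) = (k:ℝ)+1+1 := by ring
      rw [e1]
    · have hno : ¬ Even k := Nat.not_even_iff_odd.mpr ho
      have hye : Even (k+1) := by simp [Nat.even_add_one, hno]
      simp only [if_neg hno] at IH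
      simp only [if_neg hno, if_pos hye]
      rw [Module.End.mul_apply, IH, refl_plane_left, Cm_infty M h0]
      push_cast
      have e1 : -(k:ℝ) - 2 * (-1) * ((k:ℝ)+1) = (k:ℝ)+1+1 := by ring
      rw [e1]

/-- combined nonnegativity for alternating words -/
theorem alt_nonneg {i j : B} (hij : i ≠ j) {k : ℕ} (hk : M i j = 0 ∨ k < M i j) :
    ∃ A B' : ℝ, 0 ≤ A ∧ 0 ≤ B' ∧
      Tw M (alternatingWord i j k) (E i) = A • E i + B' • E j := by
  rcases hk with h0 | hk
  · have h := core0 M h0 k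
    rcases Nat.even_or_odd k with he | ho
    · rw [if_pos he, if_pos he] at h
      exact ⟨_, _, by positivity, by positivity, h⟩
    · have hno : ¬ Even k := Nat.not_even_iff_odd.mpr ho
      rw [if_neg hno, if_neg hno] at h
      exact ⟨_, _, by positivity, by positivity, h⟩
  · have hm : 2 ≤ M i j := two_le_M M hij (by omega)
    have h := (core M hij hm k).1
    have hA : 0 ≤ Sq (M i j) ((k:ℝ)+1) := by
      have := Sq_nonneg_of M hm (k := k+1) (by omega)
      push_cast at this
      exact this
    have hB : 0 ≤ Sq (M i j) (k:ℝ) := Sq_nonneg_of M hm (k := k) (by omega)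
    rcases Nat.even_or_odd k with he | ho
    · rw [if_pos he, if_pos he] at h
      exact ⟨_, _, hA, hB, h⟩
    · have hno : ¬ Even k := Nat.not_even_iff_odd.mpr ho
      rw [if_neg hno, if_neg hno] at h
      exact ⟨_, _, hB, hA, h⟩

section CS

open CoxeterSystem

variable {W : Type*} [Group W] (cs : CoxeterSystem M W)

local prefix:100 "s" => cs.simple
local prefix:100 "π" => cs.wordProd
local prefix:100 "ℓ" => cs.length

/-- The geometric representation. -/
noncomputable def rho : W →* Module.End ℝ (B → ℝ) := cs.lift ⟨fun i => refl M i, liftable M⟩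

theorem rho_simple (i : B) : rho M cs (s i) = refl M i :=
  cs.lift_apply_simple (liftable M) i

theorem rho_wordProd (ω : List B) : rho M cs (π ω) = Tw M ω := by
  induction ω with
  | nil => rw [wordProd_nil, Tw_nil, map_one]
  | cons i ω IH => rw [wordProd_cons, Tw_cons, map_mul, rho_simple, IH]

/-- Peeling an alternating suffix off an element. -/
theorem peel : ∀ L (w : W) (i j : B), ℓ w = L → i ≠ j →
    ¬ cs.IsRightDescent w i → cs.IsRightDescent w j →
    ∃ (u : W) (k : ℕ), 1 ≤ k ∧ w = u * π (alternatingWord i j k) ∧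
      ℓ w = ℓ u + k ∧ ¬ cs.IsRightDescent u i ∧ ¬ cs.IsRightDescent u j := by
  intro L
  induction L using Nat.strong_induction_on with
  | _ L IH =>
    intro w i j hL hij hi hj
    have hlen : ℓ (w * s j) + 1 = ℓ w := cs.isRightDescent_iff.mp hj
    have hdj' : ¬ cs.IsRightDescent (w * s j) j :=
      cs.isRightDescent_iff_not_isRightDescent_mul.mp hj
    by_cases hdi : cs.IsRightDescent (w * s j) i
    · obtain ⟨u, k, hk, heq, hulen, hui, huj⟩ :=
        IH (ℓ (w * s j)) (by omega) (w * s j) j i rfl hij.symm hdj' hdi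
      refine ⟨u, k + 1, by omega, ?_, by omega, huj, hui⟩
      rw [alternatingWord_succ, wordProd_concat, ← mul_assoc, ← heq]
      rw [mul_assoc, cs.simple_mul_simple_self, mul_one]
    · refine ⟨w * s j, 1, le_refl 1, ?_, by omega, hdi, hdj'⟩
      have h1 : alternatingWord i j 1 = [j] := rfl
      rw [h1, wordProd_singleton, mul_assoc, cs.simple_mul_simple_self, mul_one]

theorem peel_bound {w u : W} {i j : B} {k : ℕ} (hij : i ≠ j)
    (heq : w = u * π (alternatingWord i j k)) (hlen : ℓ w = ℓ u + k)
    (hi : ¬ cs.IsRightDescent w i) (h0 : M i j ≠ 0) : k < M i j := by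
  by_contra hk
  push_neg at hk
  -- first, k ≤ M i j
  have hk2 : k ≤ M i j := by
    by_contra hk2
    push_neg at hk2
    have h1 : ℓ (π (alternatingWord i j k)) < k := by
      have h2 := cs.not_isReduced_alternatingWord i j h0 hk2
      have h3 := cs.length_wordProd_le (alternatingWord i j k)
      rw [length_alternatingWord] at h3
      unfold CoxeterSystem.IsReduced at h2
      rw [length_alternatingWord] at h2
      omega
    have h4 := cs.length_mul_le u (π (alternatingWord i j k))
    rw [← heq] at h4
    omega
  have hkm : k = M i j := by omega
  -- braid move
  have hbraid : π (alternatingWord i j k) = π (alternatingWord j i k) := by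
    rw [hkm]
    have h7 := cs.wordProd_braidWord_eq i j
    unfold CoxeterSystem.braidWord at h7
    rw [show M.M j i = M.M i j from (M.symmetric i j).symm] at h7
    exact h7
  have hm2 : 2 ≤ M i j := two_le_M M hij h0
  obtain ⟨k', rfl⟩ : ∃ k', k = k' + 1 := ⟨k - 1, by omega⟩
  have hsucc : alternatingWord j i (k'+1) = (alternatingWord i j k').concat i :=
    alternatingWord_succ j i k'
  have hws : w * s i = u * π (alternatingWord i j k') := by
    rw [heq, hbraid, hsucc, wordProd_concat, mul_assoc, mul_assoc,
      cs.simple_mul_simple_self, mul_one]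
  have h5 : ℓ (w * s i) ≤ ℓ u + k' := by
    rw [hws]
    have := cs.length_mul_le u (π (alternatingWord i j k'))
    have h6 := cs.length_wordProd_le (alternatingWord i j k')
    rw [length_alternatingWord] at h6
    omega
  have : cs.IsRightDescent w i := by
    unfold CoxeterSystem.IsRightDescent
    omega
  exact hi this

theorem E_nonneg (i : B) (a : B) : 0 ≤ E i a := by
  unfold E
  rw [Pi.single_apply]
  split <;> norm_num

/-- Tits positivity theorem (weak form). -/
theorem positivity : ∀ L (w : W), ℓ w = L → ∀ i, ¬ cs.IsRightDescent w i →
    ∀ a, 0 ≤ (rho M cs w) (E i) a := by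
  intro L
  induction L using Nat.strong_induction_on with
  | _ L IH =>
    intro w hL i hi a
    by_cases hw : w = 1
    · rw [hw, map_one, Module.End.one_apply]
      exact E_nonneg i a
    · obtain ⟨j, hj⟩ := cs.exists_rightDescent_of_ne_one hw
      have hij : i ≠ j := by rintro rfl; exact hi hj
      obtain ⟨u, k, hk1, heq, hlen, hui, huj⟩ := peel M cs (ℓ w) w i j rfl hij hi hj
      have hbound : M i j = 0 ∨ k < M i j := by
        by_cases h0 : M i j = 0
        · exact Or.inl h0
        · exact Or.inr (peel_bound M cs hij heq hlen hi h0)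
      obtain ⟨A, B', hA, hB, hform⟩ := alt_nonneg M hij hbound
      have hulen : ℓ u < L := by omega
      have hu_i := IH (ℓ u) (by omega) u rfl i hui
      have hu_j := IH (ℓ u) (by omega) u rfl j huj
      rw [heq, map_mul, Module.End.mul_apply, rho_wordProd, hform, map_add, map_smul, map_smul]
      have : (A • (rho M cs u) (E i) + B' • (rho M cs u) (E j)) a
          = A * ((rho M cs u) (E i) a) + B' * ((rho M cs u) (E j) a) := by
        simp
      rw [this]
      have := hu_i a
      have := hu_j a
      positivity

theorem refl_E_self' (i : B) : refl M i (E i) = -E i := by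
  rw [refl_apply, fE_E, Cm_diag]
  ext b; simp [E]; ring

theorem nonpos_of_rightDescent (w : W) (i : B) (h : cs.IsRightDescent w i) :
    ∀ a, (rho M cs w) (E i) a ≤ 0 := by
  intro a
  have h2 : ¬ cs.IsRightDescent (w * s i) i :=
    cs.isRightDescent_iff_not_isRightDescent_mul.mp h
  have h3 : w = w * s i * s i := (cs.simple_mul_simple_cancel_right i).symm
  have h4 : (rho M cs w) (E i) = - ((rho M cs (w * s i)) (E i)) := by
    rw [h3]
    rw [map_mul, Module.End.mul_apply, rho_simple, refl_E_self', map_neg]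
    rw [← h3]
  rw [h4]
  have h5 := positivity M cs (ℓ (w * s i)) (w * s i) rfl i h2 a
  simp only [Pi.neg_apply]
  linarith

variable (n0 : B)

theorem coord_eq {w : W} (hw : w ∈ Subgroup.closure (cs.simple '' {i | i ≠ n0})) :
    ∀ v : B → ℝ, (rho M cs w v) n0 = v n0 := by
  induction hw using Subgroup.closure_induction with
  | mem x hx =>
    obtain ⟨i, hi, rfl⟩ := hx
    intro v
    rw [rho_simple, refl_apply]
    have : E i n0 = 0 := Pi.single_eq_of_ne (by simpa using Ne.symm hi) 1
    simp [this]
  | one => intro v; rw [map_one]; rfl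
  | mul x y hx hy px py =>
    intro v
    rw [map_mul, Module.End.mul_apply, px, py]
  | inv x hx px =>
    intro v
    have := px ((rho M cs x⁻¹) v)
    rw [← Module.End.mul_apply, ← map_mul, mul_inv_cancel, map_one] at this
    exact this.symm

theorem fixes_root {w : W} (hw : w ∈ Subgroup.closure (cs.simple '' {i | i ≠ n0}))
    (hcent : s n0 * w = w * s n0) : (rho M cs w) (E n0) = E n0 := by
  have hc : w * s n0 * w⁻¹ = s n0 := by
    rw [← hcent, mul_assoc, mul_inv_cancel, mul_one]
  set α := (rho M cs w) (E n0) with hα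
  have h1 : refl M n0 α = -α := by
    calc refl M n0 α = (rho M cs (w * s n0 * w⁻¹)) α := by rw [hc, rho_simple]
    _ = (rho M cs w) ((rho M cs (s n0)) ((rho M cs w⁻¹) ((rho M cs w) (E n0)))) := by
        rw [map_mul, map_mul]
        rfl
    _ = (rho M cs w) ((rho M cs (s n0)) (E n0)) := by
        rw [← Module.End.mul_apply (rho M cs w⁻¹), ← map_mul, inv_mul_cancel, map_one,
          Module.End.one_apply]
    _ = (rho M cs w) (- E n0) := by rw [rho_simple, refl_E_self']
    _ = -α := by rw [map_neg]
  have h2 : ∀ b, α b = fE M n0 α * E n0 b := by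
    intro b
    have h3 := congrFun h1 b
    rw [refl_apply] at h3
    simp only [Pi.sub_apply, Pi.smul_apply, Pi.neg_apply, smul_eq_mul] at h3
    linarith
  have h4 : α n0 = 1 := by
    have := coord_eq M cs n0 hw (E n0)
    rw [← hα] at this
    rw [this]
    exact Pi.single_eq_same n0 1
  have h5 : fE M n0 α = 1 := by
    have h6 := h2 n0
    have h7 : E n0 n0 = 1 := Pi.single_eq_same n0 1
    rw [h4, h7, mul_one] at h6
    linarith
  ext b
  rw [h2 b, h5, one_mul]

theorem no_leftDescent_n0 {w : W} (hw : w ∈ Subgroup.closure (cs.simple '' {i | i ≠ n0})) :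
    ¬ cs.IsLeftDescent w n0 := by
  intro h
  have h2 : cs.IsRightDescent w⁻¹ n0 := cs.isRightDescent_inv_iff.mpr h
  have h3 := nonpos_of_rightDescent M cs w⁻¹ n0 h2 n0
  have h4 : ((rho M cs w⁻¹) (E n0)) n0 = 1 := by
    rw [coord_eq M cs n0 (inv_mem hw) (E n0)]
    exact Pi.single_eq_same n0 1
  rw [h4] at h3
  linarith

theorem BF_rho (w : W) : ∀ x y, BF M ((rho M cs w) x) ((rho M cs w) y) = BF M x y := by
  induction w using cs.simple_induction with
  | simple i => intro x y; rw [rho_simple]; exact BF_refl M i x y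
  | one => intro x y; rw [map_one]; rfl
  | mul w1 w2 p1 p2 =>
    intro x y
    rw [map_mul, Module.End.mul_apply, Module.End.mul_apply, p1, p2]

theorem simple_comm {i j : B} (h2 : M i j = 2) : s i * s j = s j * s i := by
  have h := cs.simple_mul_simple_pow i j
  rw [h2, pow_two] at h
  calc s i * s j = (s i * s j)⁻¹ := eq_inv_of_mul_eq_one_left h
  _ = s j * s i := by rw [mul_inv_rev, cs.inv_simple, cs.inv_simple]

theorem main_ind : ∀ L (w : W), ℓ w = L →
    w ∈ Subgroup.closure (cs.simple '' {i | i ≠ n0}) →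
    s n0 * w = w * s n0 →
    w ∈ Subgroup.closure (cs.simple '' {i | i ≠ n0 ∧ M i n0 = 2}) := by
  intro L
  induction L using Nat.strong_induction_on with
  | _ L IH =>
    intro w hL hw hcent
    by_cases hone : w = 1
    · rw [hone]; exact one_mem _
    · obtain ⟨i, hi⟩ := cs.exists_leftDescent_of_ne_one hone
      have hin : i ≠ n0 := by
        rintro rfl
        exact no_leftDescent_n0 M cs _ hw hi
      -- show M i n0 = 2
      have hrd : cs.IsRightDescent w⁻¹ i := cs.isRightDescent_inv_iff.mpr hi
      have hβ := nonpos_of_rightDescent M cs w⁻¹ i hrd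
      set β := (rho M cs w⁻¹) (E i) with hβdef
      have hβn : β n0 = 0 := by
        rw [hβdef, coord_eq M cs n0 (inv_mem hw) (E i)]
        exact Pi.single_eq_of_ne (Ne.symm hin) 1
      have hroot : (rho M cs w⁻¹) (E n0) = E n0 := by
        apply fixes_root M cs n0 (inv_mem hw)
        calc s n0 * w⁻¹ = w⁻¹ * (w * s n0) * w⁻¹ := by group
        _ = w⁻¹ * (s n0 * w) * w⁻¹ := by rw [hcent]
        _ = w⁻¹ * s n0 := by group
      have hBF : Cm M i n0 = BF M β (E n0) := by
        rw [hβdef, ← hroot, BF_rho, BF_E_left, fE_E]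
      have hge : 0 ≤ BF M β (E n0) := by
        unfold BF
        apply Finset.sum_nonneg
        intro a _
        rw [fE_E]
        by_cases ha : a = n0
        · rw [ha, hβn]; ring_nf; rfl
        · have := hβ a
          have := Cm_nonpos M ha
          nlinarith
      have hle : Cm M i n0 ≤ 0 := Cm_nonpos M hin
      have h2 : M i n0 = 2 := by
        rw [← Cm_eq_zero_iff M hin]
        rw [hBF]
        linarith
      -- inductive step
      set v := s i * w with hv
      have hvlen : ℓ v + 1 = ℓ w := cs.isLeftDescent_iff.mp hi
      have hvmem : v ∈ Subgroup.closure (cs.simple '' {i | i ≠ n0}) := by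
        apply mul_mem _ hw
        exact Subgroup.subset_closure ⟨i, hin, rfl⟩
      have hvcent : s n0 * v = v * s n0 := by
        rw [hv, ← mul_assoc, ← simple_comm M cs h2, mul_assoc, hcent, ← mul_assoc]
      have hvX := IH (ℓ v) (by omega) v rfl hvmem hvcent
      have hw' : w = s i * v := by
        rw [hv, ← mul_assoc, cs.simple_mul_simple_self, one_mul]
      rw [hw']
      apply mul_mem _ hvX
      exact Subgroup.subset_closure ⟨i, ⟨hin, h2⟩, rfl⟩

end CS

end Stmt8Aux

/-- Let `W` be a finitely generated Coxeter group with generators `s 0, ..., s n`, let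
`W' = ⟨s i : i ≠ n⟩` be the maximal parabolic subgroup, and let
`X = {i ≠ n : M i n = 2}`. Then the centralizer of `s n` in `W'` equals the standard
parabolic subgroup `W_X = ⟨s i : i ∈ X⟩`. -/
theorem stmt8 {n : ℕ} (M : CoxeterMatrix (Fin (n + 1))) {W : Type*} [Group W]
    (cs : CoxeterSystem M W) :
    Subgroup.closure (cs.simple '' {i : Fin (n + 1) | i ≠ Fin.last n}) ⊓
        Subgroup.centralizer {cs.simple (Fin.last n)} =
      Subgroup.closure
        (cs.simple '' {i : Fin (n + 1) | i ≠ Fin.last n ∧ M i (Fin.last n) = 2}) := by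
  apply le_antisymm
  · intro w hw
    rw [Subgroup.mem_inf] at hw
    obtain ⟨hw1, hw2⟩ := hw
    rw [Subgroup.mem_centralizer_iff] at hw2
    have hcent : cs.simple (Fin.last n) * w = w * cs.simple (Fin.last n) :=
      hw2 (cs.simple (Fin.last n)) rfl
    exact Stmt8Aux.main_ind M cs (Fin.last n) (cs.length w) w rfl hw1 hcent
  · rw [Subgroup.closure_le]
    rintro x ⟨i, ⟨hin, h2⟩, rfl⟩
    rw [SetLike.mem_coe, Subgroup.mem_inf]
    constructor
    · exact Subgroup.subset_closure ⟨i, hin, rfl⟩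
    · rw [Subgroup.mem_centralizer_iff]
      rintro g hg
      rw [Set.mem_singleton_iff] at hg
      rw [hg]
      exact (Stmt8Aux.simple_comm M cs h2).symm
end

section
/- Let W be a Coxeter group with generators s_1,...,s_n, suppose m_ij is odd for some i ≠ j, and let H ≤ W be a subgroup containing both s_j and s_i s_j s_i^{-1}. Then s_i ∈ H. -/
/-- Let `W` be a Coxeter group with generators `s i`, suppose `M i j` is odd for some
`i ≠ j`, and let `H ≤ W` be a subgroup containing both `s j` and `s i * s j * (s i)⁻¹`.
Then `s i ∈ H`. -/
theorem stmt16 {n : ℕ} (M : CoxeterMatrix (Fin n)) {W : Type*} [Group W]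
    (cs : CoxeterSystem M W) (i j : Fin n) (hij : i ≠ j) (hodd : Odd (M i j))
    (H : Subgroup W) (hj : cs.simple j ∈ H)
    (hconj : cs.simple i * cs.simple j * (cs.simple i)⁻¹ ∈ H) :
    cs.simple i ∈ H := by
  obtain ⟨k, hk⟩ := hodd
  have h1 : (cs.simple j * cs.simple i) ^ (2 * k + 1) = 1 := by
    have := cs.simple_mul_simple_pow j i
    rwa [M.symmetric j i, hk] at this
  have h2 : (cs.simple j * cs.simple i) ^ (2 * k) = cs.simple i * cs.simple j := by
    have : (cs.simple j * cs.simple i) ^ (2 * k) * (cs.simple j * cs.simple i) = 1 := by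
      rw [← pow_succ]; exact h1
    have h3 : (cs.simple j * cs.simple i) ^ (2 * k) = (cs.simple j * cs.simple i)⁻¹ :=
      eq_inv_of_mul_eq_one_left this
    rw [h3, mul_inv_rev, cs.inv_simple, cs.inv_simple]
  have key : cs.simple i =
      (cs.simple j * (cs.simple i * cs.simple j * (cs.simple i)⁻¹)) ^ k * cs.simple j := by
    have e1 : cs.simple j * (cs.simple i * cs.simple j * (cs.simple i)⁻¹)
        = (cs.simple j * cs.simple i) ^ 2 := by
      rw [cs.inv_simple, sq]; simp [mul_assoc]
    rw [e1, ← pow_mul, h2, mul_assoc, cs.simple_mul_simple_self, mul_one]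
  rw [key]
  exact mul_mem (pow_mem (mul_mem hj hconj) k) hj
end

section
/- Let W be a Coxeter group with generators s_1,...,s_n, W' = ⟨s_1,...,s_{n-1}⟩ with finite index centralizer C_{W'}(s_n), and let t_1,...,t_m be the W'-conjugates of s_n with t_1 = s_n. Then W is isomorphic to the quotient of the semidirect product (C_2)^{*m} ⋊ W' (W' permuting the free factors as it permutes the t_k by conjugation) by the normal closure of the relations (s_i t_1)^{m_in} = 1 for those i < n with m_in > 2. -/
private lemma conj_pow_aux {G : Type*} [Group G] (a b : G) (k : ℕ) :
    (a * b) ^ k = a * (b * a) ^ k * a⁻¹ := by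
  rw [← conj_pow]; group

/-- **Main theorem (symmetric presentation of Coxeter groups).**
Let `W` be a finitely generated Coxeter group with generators `s_0, ..., s_n` (indexed by
`Fin (n+1)`, the last one playing the role of `s_n`), let `W' = ⟨s_i : i ≠ n⟩` be the maximal
parabolic subgroup, and assume the centralizer `C_{W'}(s_n)` has finite index in `W'`, so
that the `W'`-conjugates of `s_n` form a finite set `t_0, ..., t_m` with `t_0 = s_n`, on
which `W'` acts by conjugation via the permutations `π i` (for the generators `s_i` of `W'`).
Then `W` is isomorphic to the quotient of the progenitor `2^{*(m+1)} : W'` — presented on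
generators `S_i` (`i ≠ n`) and `T_0, ..., T_m` with the Coxeter relations of `W'`, the
relation `T_0² = 1`, and the conjugation relations `S_i⁻¹ T_k S_i = T_{k^{π(s_i)}}` — by the
normal closure of the additional relations `(S_i T_0)^{m_{i n}} = 1` for those `i` with
`m_{i n} > 2`; moreover the isomorphism sends `S_i` to `s_i` and `T_k` to `t_k`. -/
theorem stmt18 {n m : ℕ} (M : CoxeterMatrix (Fin (n + 1))) {W : Type*} [Group W]
    (cs : CoxeterSystem M W)
    (W' : Subgroup W)
    (hW' : W' = Subgroup.closure (cs.simple '' {i : Fin (n + 1) | i ≠ Fin.last n}))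
    (t : Fin (m + 1) → W)
    (ht0 : t 0 = cs.simple (Fin.last n))
    (htinj : Function.Injective t)
    (htrange : Set.range t = {x : W | ∃ w ∈ W', x = w⁻¹ * cs.simple (Fin.last n) * w})
    (π : Fin n → Equiv.Perm (Fin (m + 1)))
    (hπ : ∀ (i : Fin n) (k : Fin (m + 1)),
      t (π i k) = (cs.simple i.castSucc)⁻¹ * t k * cs.simple i.castSucc)
    (rels : Set (FreeGroup (Fin n ⊕ Fin (m + 1))))
    (hrels : rels =
      (Set.range fun p : Fin n × Fin n =>
        (FreeGroup.of (Sum.inl p.1) * FreeGroup.of (Sum.inl p.2)) ^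
          M p.1.castSucc p.2.castSucc) ∪
      {FreeGroup.of (Sum.inr 0) ^ 2} ∪
      (Set.range fun p : Fin n × Fin (m + 1) =>
        (FreeGroup.of (Sum.inl p.1))⁻¹ * FreeGroup.of (Sum.inr p.2) *
          FreeGroup.of (Sum.inl p.1) * (FreeGroup.of (Sum.inr (π p.1 p.2)))⁻¹) ∪
      {x | ∃ i : Fin n, 2 < M i.castSucc (Fin.last n) ∧
        x = (FreeGroup.of (Sum.inl i) * FreeGroup.of (Sum.inr 0)) ^
          M i.castSucc (Fin.last n)}) :
    ∃ e : PresentedGroup rels ≃* W,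
      (∀ i : Fin n, e (PresentedGroup.of (Sum.inl i)) = cs.simple i.castSucc) ∧
      (∀ k : Fin (m + 1), e (PresentedGroup.of (Sum.inr k)) = t k) := by
  classical
  -- notation
  set S : Fin n → PresentedGroup rels := fun i => PresentedGroup.of (Sum.inl i) with hS
  set T : Fin (m + 1) → PresentedGroup rels := fun k => PresentedGroup.of (Sum.inr k) with hT
  -- relations hold in the presented group
  have relone : ∀ r ∈ rels, (QuotientGroup.mk r : PresentedGroup rels) = 1 := fun r hr =>
    (QuotientGroup.eq_one_iff r).mpr (Subgroup.subset_normalClosure hr)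
  have mkhom : ∀ r : FreeGroup (Fin n ⊕ Fin (m+1)),
      (QuotientGroup.mk r : PresentedGroup rels) = (QuotientGroup.mk' _) r := fun _ => rfl
  have r1 : ∀ i j : Fin n, (S i * S j) ^ M i.castSucc j.castSucc = 1 := by
    intro i j
    have := relone _ (by rw [hrels]; exact Or.inl (Or.inl (Or.inl ⟨(i, j), rfl⟩)))
    rw [mkhom, map_pow, map_mul] at this
    exact this
  have r2 : T 0 ^ 2 = 1 := by
    have := relone _ (by rw [hrels]; exact Or.inl (Or.inl (Or.inr rfl)))
    rw [mkhom, map_pow] at this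
    exact this
  have r3 : ∀ (i : Fin n) (k : Fin (m+1)), (S i)⁻¹ * T k * S i = T (π i k) := by
    intro i k
    have := relone _ (by rw [hrels]; exact Or.inl (Or.inr ⟨(i, k), rfl⟩))
    rw [mkhom, map_mul, map_mul, map_mul, map_inv, map_inv] at this
    have := mul_eq_one_iff_eq_inv.mp this
    rw [inv_inv] at this
    exact this
  have r4 : ∀ i : Fin n, 2 < M i.castSucc (Fin.last n) →
      (S i * T 0) ^ M i.castSucc (Fin.last n) = 1 := by
    intro i hi
    have := relone _ (by rw [hrels]; exact Or.inr ⟨i, hi, rfl⟩)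
    rw [mkhom, map_pow, map_mul] at this
    exact this
  have Ssq : ∀ i : Fin n, S i * S i = 1 := by
    intro i
    have := r1 i i
    rwa [M.diagonal, pow_one] at this
  -- the key mixed relation, for all values of M i n
  have rST : ∀ i : Fin n, (S i * T 0) ^ M i.castSucc (Fin.last n) = 1 := by
    intro i
    rcases Nat.lt_or_ge (M i.castSucc (Fin.last n)) 3 with h3 | h3
    · interval_cases h : M i.castSucc (Fin.last n)
      · simp
      · exact absurd h (M.off_diagonal _ _ ((Fin.castSucc_lt_last i).ne))
      · -- commuting case: π i 0 = 0
        have hcomm : cs.simple i.castSucc * cs.simple (Fin.last n) *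
            (cs.simple i.castSucc * cs.simple (Fin.last n)) = 1 := by
          have := cs.simple_mul_simple_pow i.castSucc (Fin.last n)
          rw [h] at this
          rw [← sq]; exact this
        have hpi0 : π i 0 = 0 := by
          apply htinj
          rw [hπ, ht0]
          rw [cs.inv_simple]
          have h4 : cs.simple i.castSucc * cs.simple (Fin.last n) * cs.simple i.castSucc *
              cs.simple (Fin.last n) = 1 := by rw [← hcomm]; group
          have h5 := mul_eq_one_iff_eq_inv.mp h4
          rw [cs.inv_simple] at h5
          exact h5
        have hc : (S i)⁻¹ * T 0 * S i = T 0 := by rw [r3, hpi0]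
        calc (S i * T 0) ^ 2 = S i * T 0 * (S i * T 0) := sq _
          _ = S i * S i * ((S i)⁻¹ * T 0 * S i) * T 0 := by group
          _ = T 0 * T 0 := by rw [hc, Ssq, one_mul]
          _ = 1 := by rw [← sq]; exact r2
    · exact r4 i h3
  -- the backward map W →* PresentedGroup rels
  set ψ : Fin (n + 1) → PresentedGroup rels := fun i =>
    if h : i = Fin.last n then T 0 else S (i.castPred h) with hψ
  have hlift : M.IsLiftable ψ := by
    intro i j
    by_cases hi : i = Fin.last n <;> by_cases hj : j = Fin.last n
    · subst hi; subst hj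
      simp only [hψ, dif_pos rfl]
      rw [M.diagonal, pow_one, ← sq]
      exact r2
    · subst hi
      simp only [hψ, dif_pos rfl, dif_neg hj]
      have hsym : M (Fin.last n) j = M j (Fin.last n) := M.symmetric _ _
      rw [hsym, conj_pow_aux]
      have := rST (j.castPred hj)
      rw [Fin.castSucc_castPred] at this
      rw [this]
      group
    · subst hj
      simp only [hψ, dif_pos rfl, dif_neg hi]
      have := rST (i.castPred hi)
      rw [Fin.castSucc_castPred] at this
      exact this
    · simp only [hψ, dif_neg hi, dif_neg hj]
      have := r1 (i.castPred hi) (j.castPred hj)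
      rw [Fin.castSucc_castPred, Fin.castSucc_castPred] at this
      exact this
  set g : W →* PresentedGroup rels := cs.lift ⟨ψ, hlift⟩ with hg
  have hgsimple : ∀ i, g (cs.simple i) = ψ i := fun i => cs.lift_apply_simple hlift i
  -- the forward map
  set φ : Fin n ⊕ Fin (m + 1) → W := Sum.elim (fun i => cs.simple i.castSucc) t with hφ
  have hφrels : ∀ r ∈ rels, FreeGroup.lift φ r = 1 := by
    intro r hr
    rw [hrels] at hr
    rcases hr with ((⟨⟨i, j⟩, rfl⟩ | hr) | ⟨⟨i, k⟩, rfl⟩) | ⟨i, hi, rfl⟩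
    · rw [map_pow, map_mul, FreeGroup.lift_apply_of, FreeGroup.lift_apply_of]
      exact cs.simple_mul_simple_pow i.castSucc j.castSucc
    · rw [Set.mem_singleton_iff] at hr
      subst hr
      rw [map_pow, FreeGroup.lift_apply_of]
      simp only [hφ, Sum.elim_inr, ht0]
      exact cs.simple_sq (Fin.last n)
    · simp only [map_mul, map_inv, FreeGroup.lift_apply_of]
      simp only [hφ, Sum.elim_inl, Sum.elim_inr]
      rw [← hπ]
      group
    · rw [map_pow, map_mul, FreeGroup.lift_apply_of, FreeGroup.lift_apply_of]
      simp only [hφ, Sum.elim_inl, Sum.elim_inr, ht0]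
      exact cs.simple_mul_simple_pow i.castSucc (Fin.last n)
  set f : PresentedGroup rels →* W := PresentedGroup.toGroup hφrels with hf
  have hfS : ∀ i, f (S i) = cs.simple i.castSucc := fun i => PresentedGroup.toGroup.of hφrels
  have hfT : ∀ k, f (T k) = t k := fun k => PresentedGroup.toGroup.of hφrels
  -- key conjugation lemma
  have key : ∀ w ∈ W', ∀ k k' : Fin (m + 1), t k' = w⁻¹ * t k * w →
      (g w)⁻¹ * T k * g w = T k' := by
    intro w hw
    rw [hW'] at hw
    induction hw using Subgroup.closure_induction with
    | mem x hx =>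
      obtain ⟨i, hi, rfl⟩ := hx
      intro k k' hk'
      have hgx : g (cs.simple i) = S (i.castPred hi) := by
        rw [hgsimple, hψ]; simp only [dif_neg hi]
      rw [hgx, r3]
      congr 1
      apply htinj
      rw [hπ, Fin.castSucc_castPred, ← hk']
    | one =>
      intro k k' hk'
      rw [inv_one, one_mul, mul_one] at hk'
      rw [map_one, inv_one, one_mul, mul_one, htinj hk']
    | mul a b ha hb iha ihb =>
      intro k k' hk'
      -- a ∈ W', so a⁻¹ * t k * a is in the range of t
      have haW : a ∈ W' := by rw [hW']; exact ha
      have hbW : b ∈ W' := by rw [hW']; exact hb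
      have hmem : a⁻¹ * t k * a ∈ Set.range t := by
        have hk : t k ∈ Set.range t := ⟨k, rfl⟩
        rw [htrange] at hk ⊢
        obtain ⟨u, hu, hu2⟩ := hk
        exact ⟨u * a, mul_mem hu haW, by rw [hu2]; group⟩
      obtain ⟨k'', hk''⟩ := hmem
      have h1 := iha k k'' hk''
      have h2 := ihb k'' k' (by rw [hk'', hk']; group)
      rw [map_mul]
      calc (g a * g b)⁻¹ * T k * (g a * g b)
          = (g b)⁻¹ * ((g a)⁻¹ * T k * g a) * g b := by group
        _ = (g b)⁻¹ * T k'' * g b := by rw [h1]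
        _ = T k' := h2
    | inv a ha iha =>
      intro k k' hk'
      have h1 : t k = a⁻¹ * t k' * a := by rw [hk']; group
      have h2 := iha k' k h1
      rw [map_inv, inv_inv, ← h2]
      group
  -- the compositions are the identity
  have hfg : f.comp g = MonoidHom.id W := by
    apply cs.ext_simple
    intro i
    simp only [MonoidHom.comp_apply, MonoidHom.id_apply, hgsimple]
    by_cases hi : i = Fin.last n
    · subst hi
      simp only [hψ, dif_pos rfl]
      rw [hfT, ht0]
    · simp only [hψ, dif_neg hi]
      rw [hfS, Fin.castSucc_castPred]
  have hgf : g.comp f = MonoidHom.id (PresentedGroup rels) := by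
    apply PresentedGroup.ext
    rintro (i | k)
    · simp only [MonoidHom.comp_apply, MonoidHom.id_apply]
      rw [show (PresentedGroup.of (Sum.inl i) : PresentedGroup rels) = S i from rfl,
        hfS, hgsimple]
      simp only [hψ, dif_neg ((Fin.castSucc_lt_last i).ne), Fin.castPred_castSucc]
    · simp only [MonoidHom.comp_apply, MonoidHom.id_apply]
      rw [show (PresentedGroup.of (Sum.inr k) : PresentedGroup rels) = T k from rfl, hfT]
      have hk : t k ∈ Set.range t := ⟨k, rfl⟩
      rw [htrange] at hk
      obtain ⟨w, hw, hw2⟩ := hk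
      have hlast : g (cs.simple (Fin.last n)) = T 0 := by
        rw [hgsimple]; simp only [hψ, dif_pos rfl]
      have := key w hw 0 k (by rw [hw2, ht0])
      rw [hw2]
      simp only [map_mul, map_inv, hlast]
      exact this
  refine ⟨f.toMulEquiv g hgf hfg, fun i => hfS i, fun k => hfT k⟩
end
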